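/- Fix x₀ ∈ ℝ^N and suppose the norm A is decomposable at L* x₀ with data (T₀, e₀); set S₀ := T₀⊥. Let α ∈ ∂A(L* x₀) satisfy A*(P_{S₀} α) < 1, and let C_A > 0 satisfy A(z) ≥ C_A ‖z‖₂ for all z ∈ ℝ^P. Then for every x⋆ ∈ ℝ^N, ‖L_{S₀}*(x⋆ − x₀)‖₂ ≤ D_α(L* x⋆, L* x₀) / (C_A (1 − A*(P_{S₀} α))). -/

import Mathlib

open RealInnerProductSpace

noncomputable section

abbrev Euc (n : ℕ) := EuclideanSpace ℝ (Fin n)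

def proj {n : ℕ} (V : Submodule ℝ (Euc n)) : Euc n →L[ℝ] Euc n :=
  V.subtypeL.comp (V.orthogonalProjection)

def dualNorm {n : ℕ} (A : Euc n → ℝ) (α : Euc n) : ℝ :=
  sSup {r : ℝ | ∃ v : Euc n, A v ≤ 1 ∧ r = ⟪α, v⟫}

lemma proj_mem {n : ℕ} (V : Submodule ℝ (Euc n)) (x : Euc n) : proj V x ∈ V :=
  (V.orthogonalProjection x).2

lemma proj_eq_self {n : ℕ} (V : Submodule ℝ (Euc n)) {x : Euc n} (hx : x ∈ V) :
    proj V x = x :=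
  Submodule.starProjection_eq_self_iff.mpr hx

lemma proj_eq_zero {n : ℕ} (V : Submodule ℝ (Euc n)) {x : Euc n} (hx : x ∈ Vᗮ) :
    proj V x = 0 := by
  show (V.orthogonalProjection x : Euc n) = 0
  rw [Submodule.orthogonalProjectionOnto_apply_of_mem_orthogonal hx]
  simp

lemma proj_inner {n : ℕ} (V : Submodule ℝ (Euc n)) (x y : Euc n) :
    ⟪proj V x, y⟫ = ⟪x, proj V y⟫ :=
  Submodule.inner_starProjection_left_eq_right V x y

lemma proj_add_proj {n : ℕ} (V : Submodule ℝ (Euc n)) (x : Euc n) :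
    proj V x + proj Vᗮ x = x :=
  Submodule.starProjection_add_starProjection_orthogonal (K := V) x

lemma dualNorm_zero {n : ℕ} (A : Euc n → ℝ) (hA0 : A 0 = 0) : dualNorm A (0 : Euc n) = 0 := by
  unfold dualNorm
  have hset : {r : ℝ | ∃ v : Euc n, A v ≤ 1 ∧ r = ⟪(0:Euc n), v⟫} = {0} := by
    ext r
    constructor
    · rintro ⟨v, hv, rfl⟩
      simp
    · rintro rfl
      exact ⟨0, by simp [hA0], by simp⟩
  rw [hset, csSup_singleton]

lemma dual_bdd {n : ℕ} (A : Euc n → ℝ) {CA : ℝ} (hCA : 0 < CA)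
    (hCAbd : ∀ z : Euc n, CA * ‖z‖ ≤ A z) (γ : Euc n) :
    BddAbove {r : ℝ | ∃ v : Euc n, A v ≤ 1 ∧ r = ⟪γ, v⟫} := by
  refine ⟨‖γ‖ * (1/CA), ?_⟩
  rintro r ⟨v, hv, rfl⟩
  have h1 : ‖v‖ ≤ 1/CA := by
    rw [le_div_iff₀ hCA]; nlinarith [hCAbd v]
  calc ⟪γ, v⟫ ≤ ‖γ‖ * ‖v‖ := real_inner_le_norm _ _
    _ ≤ ‖γ‖ * (1/CA) := mul_le_mul_of_nonneg_left h1 (norm_nonneg _)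

lemma inner_le_dualNorm {n : ℕ} (A : Euc n → ℝ)
    (hA : ∀ (c : ℝ) (x : Euc n), A (c • x) = |c| * A x)
    {CA : ℝ} (hCA : 0 < CA) (hCAbd : ∀ z : Euc n, CA * ‖z‖ ≤ A z) (γ v : Euc n) :
    ⟪γ, v⟫ ≤ dualNorm A γ * A v := by
  have hA0 : A 0 = 0 := by
    have := hA 0 0; simpa using this
  have hdnn : 0 ≤ dualNorm A γ := by
    have : (0:ℝ) ∈ {r : ℝ | ∃ v : Euc n, A v ≤ 1 ∧ r = ⟪γ, v⟫} :=
      ⟨0, by simp [hA0], by simp⟩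
    exact le_csSup (dual_bdd A hCA hCAbd γ) this
  by_cases hv : v = 0
  · simp [hv, hA0]
  · have hAv : 0 < A v := lt_of_lt_of_le (mul_pos hCA (norm_pos_iff.mpr hv)) (hCAbd v)
    have h1 : A ((A v)⁻¹ • v) ≤ 1 := by
      rw [hA, abs_of_pos (inv_pos.mpr hAv)]
      field_simp
      exact le_refl _
    have hle : ⟪γ, (A v)⁻¹ • v⟫ ≤ dualNorm A γ :=
      le_csSup (dual_bdd A hCA hCAbd γ) ⟨_, h1, rfl⟩
    rw [real_inner_smul_right] at hle
    have h2 := mul_le_mul_of_nonneg_right hle hAv.le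
    rw [mul_comm ((A v)⁻¹) _, mul_assoc, inv_mul_cancel₀ (ne_of_gt hAv), mul_one] at h2
    linarith

def subdiff {n : ℕ} (f : Euc n → ℝ) (x : Euc n) : Set (Euc n) :=
  {g : Euc n | ∀ y : Euc n, f x + ⟪g, y - x⟫ ≤ f y}

def IsNorm {n : ℕ} (A : Euc n → ℝ) : Prop :=
  (∀ x, A x = 0 ↔ x = 0) ∧ (∀ (c : ℝ) (x : Euc n), A (c • x) = |c| * A x) ∧
    (∀ x y, A (x + y) ≤ A x + A y)

def Decomposable {n : ℕ} (A : Euc n → ℝ) (u : Euc n) (T : Submodule ℝ (Euc n)) (e : Euc n) :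
    Prop :=
  e ∈ T ∧
  subdiff A u = {α : Euc n | proj T α = e ∧ dualNorm A (proj Tᗮ α) ≤ 1} ∧
  ∀ z : Euc n, z ∈ Tᗮ →
    A z = sSup {r : ℝ | ∃ v ∈ (Tᗮ : Submodule ℝ (Euc n)), dualNorm A v ≤ 1 ∧ r = ⟪v, z⟫}

def obj {N M P : ℕ} (Φ : Euc N →L[ℝ] Euc M) (L : Euc P →L[ℝ] Euc N) (A : Euc P → ℝ)
    (y : Euc M) (lam : ℝ) (x : Euc N) : ℝ :=
  (1/2) * ‖y - Φ x‖^2 + lam * A (ContinuousLinearMap.adjoint L x)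

def SC {N M P : ℕ} (Φ : Euc N →L[ℝ] Euc M) (L : Euc P →L[ℝ] Euc N) (A : Euc P → ℝ)
    (x : Euc N) (η : Euc M) (α : Euc P) : Prop :=
  α ∈ subdiff A (ContinuousLinearMap.adjoint L x) ∧
  ContinuousLinearMap.adjoint Φ η = L α ∧
  L α ∈ subdiff (fun z => A (ContinuousLinearMap.adjoint L z)) x

def breg {n : ℕ} (A : Euc n → ℝ) (α u u₀ : Euc n) : ℝ :=
  A u - A u₀ - ⟪α, u - u₀⟫


theorem stmt5 {N P : ℕ} (L : Euc P →L[ℝ] Euc N)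
    (A : Euc P → ℝ) (hA : IsNorm A) (x₀ : Euc N)
    (T₀ : Submodule ℝ (Euc P)) (e₀ : Euc P)
    (hdec : Decomposable A (ContinuousLinearMap.adjoint L x₀) T₀ e₀)
    (α : Euc P) (hα : α ∈ subdiff A (ContinuousLinearMap.adjoint L x₀))
    (hsat : dualNorm A (proj T₀ᗮ α) < 1)
    (CA : ℝ) (hCA : 0 < CA) (hCAbd : ∀ z : Euc P, CA * ‖z‖ ≤ A z)
    (xs : Euc N) :
    ‖proj T₀ᗮ (ContinuousLinearMap.adjoint L (xs - x₀))‖ ≤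
      breg A α (ContinuousLinearMap.adjoint L xs) (ContinuousLinearMap.adjoint L x₀) /
        (CA * (1 - dualNorm A (proj T₀ᗮ α))) := by
  obtain ⟨hA0, hAhom, hAadd⟩ := hA
  set u := ContinuousLinearMap.adjoint L xs with hu
  set u₀ := ContinuousLinearMap.adjoint L x₀ with hu₀
  have hsub : ContinuousLinearMap.adjoint L (xs - x₀) = u - u₀ := map_sub _ _ _
  rw [hsub]
  obtain ⟨he₀, hchar, hsup⟩ := hdec
  set S := T₀ᗮ with hS
  set w := proj S (u - u₀) with hw
  set a := dualNorm A (proj S α) with ha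
  have hαT : proj T₀ α = e₀ := by
    have := hchar ▸ hα
    exact this.1
  have hwS : w ∈ S := proj_mem S _
  have h1a : 0 < 1 - a := by linarith
  -- key bound for each admissible v
  have hkey : ∀ v : Euc P, v ∈ S → dualNorm A v ≤ 1 →
      ⟪v, w⟫ ≤ breg A α u u₀ + ⟪proj S α, u - u₀⟫ := by
    intro v hvS hv1
    have hβ : (e₀ + v) ∈ subdiff A u₀ := by
      rw [hchar]
      constructor
      · rw [map_add, proj_eq_self T₀ he₀,
          proj_eq_zero T₀ (by exact hvS), add_zero]
      · rw [map_add, proj_eq_self S hvS,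
          proj_eq_zero S (Submodule.le_orthogonal_orthogonal T₀ he₀), zero_add]
        exact hv1
    have hineq := hβ u
    have hαdec : α = e₀ + proj S α := by
      rw [← hαT]; exact (proj_add_proj T₀ α).symm
    have hvw : ⟪v, u - u₀⟫ = ⟪v, w⟫ := by
      rw [hw, ← proj_inner, proj_eq_self S hvS]
    have hexp : ⟪e₀ + v, u - u₀⟫ = ⟪α, u - u₀⟫ - ⟪proj S α, u - u₀⟫ + ⟪v, w⟫ := by
      have h3 : ⟪α, u - u₀⟫ = ⟪e₀, u - u₀⟫ + ⟪proj S α, u - u₀⟫ := by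
        nth_rewrite 1 [hαdec]; rw [inner_add_left]
      rw [inner_add_left, ← hvw]; linarith
    rw [hexp] at hineq
    simp only [breg]
    linarith
  -- A w ≤ breg + inner
  have hAw : A w ≤ breg A α u u₀ + ⟪proj S α, u - u₀⟫ := by
    rw [hsup w hwS]
    apply csSup_le
    · refine ⟨0, 0, Submodule.zero_mem S, ?_, by simp⟩
      rw [dualNorm_zero A ((hA0 0).mpr rfl)]
      norm_num
    · rintro r ⟨v, hvS, hv1, rfl⟩
      exact hkey v hvS hv1
  have hPS : ⟪proj S α, u - u₀⟫ ≤ a * A w := by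
    have h1 : ⟪proj S α, u - u₀⟫ = ⟪proj S α, w⟫ := by
      rw [proj_inner S α (u - u₀), proj_inner S α w, proj_eq_self S hwS]
    rw [h1]
    exact inner_le_dualNorm A hAhom hCA hCAbd _ _
  have hAwn : CA * ‖w‖ ≤ A w := hCAbd w
  have hfin : ‖w‖ * (CA * (1 - a)) ≤ breg A α u u₀ := by
    nlinarith
  rw [le_div_iff₀ (by positivity)]
  exact hfin
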